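/- arXiv:2105.12616 — 2 statements merged into one kernel-verified Lean document; each statement's English description precedes it below -/
import Mathlib

section
/- Let i, j be integers with (n−2)/2 ≤ i < j ≤ n−1. Then χ(i) > χ(j). -/
open Finset

/-- `t = s^(e/2)` as a real number. -/
noncomputable def tval (s e : ℕ) : ℝ := (s : ℝ) ^ ((e : ℝ) / 2)

/-- `F(i,k) = ∏_{u=n−2i+k−1}^{n−i−2} (s^u·t + 1)`. -/
noncomputable def F (n s e : ℕ) (i k : ℤ) : ℝ :=
  ∏ u ∈ Finset.Icc ((n:ℤ) - 2*i + k - 1) ((n:ℤ) - i - 2), ((s:ℝ) ^ u * tval s e + 1)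

/-- `G(i,k) = s^{(i−k)²} · ∏_{v=1}^{k+1} (s^{i−k+v}−1)/(s^v−1)
  · ∏_{v=1}^{i−k} (s^{n−2i+k−1+v}−1)/(s^v−1)`. -/
noncomputable def G (n s : ℕ) (i k : ℤ) : ℝ :=
  (s:ℝ) ^ ((i - k)^2) *
  (∏ v ∈ Finset.Icc (1:ℤ) (k + 1), ((s:ℝ) ^ (i - k + v) - 1) / ((s:ℝ) ^ v - 1)) *
  (∏ v ∈ Finset.Icc (1:ℤ) (i - k), ((s:ℝ) ^ ((n:ℤ) - 2*i + k - 1 + v) - 1) / ((s:ℝ) ^ v - 1))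

/-- `κ(i) = Σ_{k = max(2i−n+1,−1)}^{i−1} F(i,k)·G(i,k)`, the degree of `(Δ_i, ⊥)`. -/
noncomputable def kappa (n s e : ℕ) (i : ℤ) : ℝ :=
  ∑ k ∈ Finset.Icc (max (2*i - (n:ℤ) + 1) (-1)) (i - 1), F n s e i k * G n s i k

/-- `χ(i) = κ(i) + s^(2n−2i−2)·t·(s^(i+1)−1)/(s−1)`, the degree of the graph `(Δ_i, ⊥∪≈)`. -/
noncomputable def chi (n s e : ℕ) (i : ℤ) : ℝ :=
  kappa n s e i +
    (s:ℝ) ^ (2*(n:ℤ) - 2*i - 2) * tval s e * ((s:ℝ) ^ (i + 1) - 1) / ((s:ℝ) - 1)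

noncomputable def W (S : ℝ) (A B : ℤ) : ℝ := ∏ u ∈ Icc A B, (S ^ u - 1)
noncomputable def P (S t : ℝ) (A B : ℤ) : ℝ := ∏ u ∈ Icc A B, (S ^ u * t + 1)

lemma Wpos {S : ℝ} (hS : 1 < S) {A : ℤ} (hA : 1 ≤ A) (B : ℤ) : 0 < W S A B := by
  refine Finset.prod_pos fun u hu => ?_
  have h1 : 1 ≤ u := le_trans hA (mem_Icc.mp hu).1
  have := one_lt_zpow₀ hS (by omega : 0 < u)
  linarith

lemma Ppos {S t : ℝ} (hS : 0 < S) (ht : 0 < t) (A B : ℤ) : 0 < P S t A B := by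
  refine Finset.prod_pos fun u _ => ?_
  have := zpow_pos hS u
  positivity

lemma prod_shift (f : ℤ → ℝ) (c A B : ℤ) :
    ∏ v ∈ Icc A B, f (c + v) = ∏ u ∈ Icc (c+A) (c+B), f u := by
  rw [← Finset.map_add_left_Icc, Finset.prod_map]; rfl

lemma sum_shift' (f : ℤ → ℝ) (c A B : ℤ) :
    ∑ v ∈ Icc A B, f (v + c) = ∑ u ∈ Icc (A+c) (B+c), f u := by
  rw [← Finset.map_add_right_Icc, Finset.sum_map]; rfl

lemma sum_bot (f : ℤ → ℝ) {A B : ℤ} (h : A ≤ B) :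
    ∑ u ∈ Icc A B, f u = f A + ∑ u ∈ Icc (A+1) B, f u := by
  have hins : Icc A B = insert A (Icc (A+1) B) := by
    ext x; simp only [mem_Icc, mem_insert]; omega
  rw [hins, Finset.sum_insert (by simp only [mem_Icc]; omega)]

lemma prod_top (f : ℤ → ℝ) {A B : ℤ} (h : A ≤ B) :
    ∏ u ∈ Icc A B, f u = (∏ u ∈ Icc A (B-1), f u) * f B := by
  have hins : Icc A B = insert B (Icc A (B-1)) := by
    ext x; simp only [mem_Icc, mem_insert]; omega
  rw [hins, Finset.prod_insert (by simp only [mem_Icc]; omega), mul_comm]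

lemma prod_bot (f : ℤ → ℝ) {A B : ℤ} (h : A ≤ B) :
    ∏ u ∈ Icc A B, f u = f A * ∏ u ∈ Icc (A+1) B, f u := by
  have hins : Icc A B = insert A (Icc (A+1) B) := by
    ext x; simp only [mem_Icc, mem_insert]; omega
  rw [hins, Finset.prod_insert (by simp only [mem_Icc]; omega)]

lemma key {S t : ℝ} (hS : 2 ≤ S) (ht : 0 < t) (x y m : ℤ)
    (hm : 1 ≤ m) (hmy : m + 1 ≤ y) (hyx : y ≤ x) :
    (S^x - 1) * (S^(y-m) - 1) * (S^(y-m-1)*t + 1)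
      ≤ (S^(x-m) - 1) * (S^y - 1) * (S^(y-1)*t + 1) := by
  have hS1 : 1 < S := by linarith
  have hS0 : (0:ℝ) < S := by linarith
  have hSne : S ≠ 0 := ne_of_gt hS0
  have hxym : S ^ x * S ^ (y-m) = S ^ (x-m) * S ^ y := by
    rw [← zpow_add₀ hSne, ← zpow_add₀ hSne]; ring_nf
  have h1 : S ^ (y-m) ≤ S ^ (x-m) := zpow_le_zpow_right₀ hS1.le (by omega)
  have h2 : (1:ℝ) ≤ S ^ m := one_le_zpow₀ hS1.le (by omega)
  have h3 : S ^ y - S ^ (y-m) ≤ S ^ x - S ^ (x-m) := by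
    have e1 : S ^ y = S ^ (y-m) * S ^ m := by rw [← zpow_add₀ hSne]; ring_nf
    have e2 : S ^ x = S ^ (x-m) * S ^ m := by rw [← zpow_add₀ hSne]; ring_nf
    rw [e1, e2]; nlinarith [h1, h2]
  have hA : (S^x - 1) * (S^(y-m) - 1) ≤ (S^(x-m) - 1) * (S^y - 1) := by nlinarith [hxym, h3]
  have hApos : (0:ℝ) ≤ (S^x - 1) * (S^(y-m) - 1) := by
    have := one_le_zpow₀ hS1.le (by omega : 0 ≤ x)
    have := one_le_zpow₀ hS1.le (by omega : 0 ≤ y - m)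
    nlinarith
  have hT : S ^ (y-m-1) * t + 1 ≤ S ^ (y-1) * t + 1 := by
    have := zpow_le_zpow_right₀ hS1.le (by omega : y - m - 1 ≤ y - 1)
    nlinarith
  have hTpos : (0:ℝ) ≤ S ^ (y-m-1) * t + 1 := by positivity
  exact mul_le_mul hA hT hTpos (le_trans hApos hA)

lemma main {S t : ℝ} (hS : 2 ≤ S) (ht : 0 < t) (m k c : ℤ)
    (hm : 1 ≤ m) (hk : 0 ≤ k) (hc : 1 ≤ c) (hck : c ≤ k + 2) :
    P S t (c-1) (c+m-2) * (S^(m^2) * (W S (m+1) (m+k+2) / W S 1 (k+2)) * (W S c (c+m-1) / W S 1 m))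
  ≤ P S t c (c+m-1) * (S^(m^2) * (W S (m+1) (m+k+1) / W S 1 (k+1)) * (W S (c+1) (c+m) / W S 1 m)) := by
  have hS1 : (1:ℝ) < S := by linarith
  have hS0 : (0:ℝ) < S := by linarith
  have hW1k1 : 0 < W S 1 (k+1) := Wpos hS1 le_rfl _
  have hW1k2 : 0 < W S 1 (k+2) := Wpos hS1 le_rfl _
  have hW1m : 0 < W S 1 m := Wpos hS1 le_rfl _
  have hWm1a : 0 < W S (m+1) (m+k+1) := Wpos hS1 (by omega) _
  have hWm1b : 0 < W S (m+1) (m+k+2) := Wpos hS1 (by omega) _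
  have hWc : 0 < W S c (c+m-1) := Wpos hS1 hc _
  have hWc1 : 0 < W S (c+1) (c+m) := Wpos hS1 (by omega) _
  have hP1 : 0 < P S t (c-1) (c+m-2) := Ppos hS0 ht _ _
  have hP2 : 0 < P S t c (c+m-1) := Ppos hS0 ht _ _
  have hpow : (0:ℝ) < S^(m^2) := zpow_pos hS0 _
  have hW1 : W S (m+1) (m+k+2) = W S (m+1) (m+k+1) * (S^(m+k+2)-1) := by
    have h := prod_top (fun u => S^u - 1) (A := m+1) (B := m+k+2) (by omega)
    simp only [show m+k+2-1 = m+k+1 by ring] at h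
    simpa [W] using h
  have hW2 : W S 1 (k+2) = W S 1 (k+1) * (S^(k+2)-1) := by
    have h := prod_top (fun u => S^u - 1) (A := (1:ℤ)) (B := k+2) (by omega)
    simp only [show k+2-1 = k+1 by ring] at h
    simpa [W] using h
  have hW3 : W S c (c+m-1) * (S^(c+m)-1) = W S (c+1) (c+m) * (S^c - 1) := by
    have h1 := prod_top (fun u => S^u - 1) (A := c) (B := c+m) (by omega)
    have h2 := prod_bot (fun u => S^u - 1) (A := c) (B := c+m) (by omega)
    simp only [W]
    rw [← h1, h2]; ring
  have hP : P S t (c-1) (c+m-2) * (S^(c+m-1)*t+1) = P S t c (c+m-1) * (S^(c-1)*t+1) := by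
    have h1 := prod_top (fun u => S^u * t + 1) (A := c-1) (B := c+m-1) (by omega)
    have h2 := prod_bot (fun u => S^u * t + 1) (A := c-1) (B := c+m-1) (by omega)
    simp only [show c+m-1-1 = c+m-2 by ring, show c-1+1 = c by ring] at h1 h2
    simp only [P]
    rw [← h1, h2]; ring
  have hkey := key hS ht (m+k+2) (c+m) m hm (by omega) (by omega)
  simp only [show c+m-m = c by ring, show c+m-m-1 = c-1 by ring,
    show m+k+2-m = k+2 by ring, show c+m-1 = c+m-1 by ring] at hkey
  have hq : (0:ℝ) < (S^(c+m)-1) * (S^(c+m-1)*t+1) := by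
    have h1 : (1:ℝ) < S^(c+m) := one_lt_zpow₀ hS1 (by omega)
    have h2 : (0:ℝ) < S^(c+m-1) := zpow_pos hS0 _
    have : (0:ℝ) < S^(c+m-1)*t+1 := by positivity
    nlinarith
  have hcore : P S t (c-1) (c+m-2) * (S^(m+k+2)-1) * W S c (c+m-1)
      ≤ P S t c (c+m-1) * W S (c+1) (c+m) * (S^(k+2)-1) := by
    refine le_of_mul_le_mul_right ?_ hq
    calc P S t (c-1) (c+m-2) * (S^(m+k+2)-1) * W S c (c+m-1) * ((S^(c+m)-1) * (S^(c+m-1)*t+1))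
        = (P S t (c-1) (c+m-2) * (S^(c+m-1)*t+1)) * ((W S c (c+m-1) * (S^(c+m)-1)) * (S^(m+k+2)-1)) := by ring
      _ = (P S t c (c+m-1) * (S^(c-1)*t+1)) * ((W S (c+1) (c+m) * (S^c-1)) * (S^(m+k+2)-1)) := by
          rw [hP, hW3]
      _ = (P S t c (c+m-1) * W S (c+1) (c+m)) * ((S^(m+k+2)-1) * (S^c-1) * (S^(c-1)*t+1)) := by ring
      _ ≤ (P S t c (c+m-1) * W S (c+1) (c+m)) * ((S^(k+2)-1) * (S^(c+m)-1) * (S^(c+m-1)*t+1)) := by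
          exact mul_le_mul_of_nonneg_left hkey (le_of_lt (mul_pos hP2 hWc1))
      _ = P S t c (c+m-1) * W S (c+1) (c+m) * (S^(k+2)-1) * ((S^(c+m)-1) * (S^(c+m-1)*t+1)) := by
          ring
  have eL : P S t (c-1) (c+m-2) * (S^(m^2) * (W S (m+1) (m+k+2) / W S 1 (k+2)) * (W S c (c+m-1) / W S 1 m))
      = (P S t (c-1) (c+m-2) * (S^(m^2) * W S (m+1) (m+k+2) * W S c (c+m-1))) / (W S 1 (k+2) * W S 1 m) := by
    field_simp
  have eR : P S t c (c+m-1) * (S^(m^2) * (W S (m+1) (m+k+1) / W S 1 (k+1)) * (W S (c+1) (c+m) / W S 1 m))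
      = (P S t c (c+m-1) * (S^(m^2) * W S (m+1) (m+k+1) * W S (c+1) (c+m))) / (W S 1 (k+1) * W S 1 m) := by
    field_simp
  rw [eL, eR, div_le_div_iff₀ (mul_pos hW1k2 hW1m) (mul_pos hW1k1 hW1m)]
  calc P S t (c-1) (c+m-2) * (S^(m^2) * W S (m+1) (m+k+2) * W S c (c+m-1)) * (W S 1 (k+1) * W S 1 m)
      = (P S t (c-1) (c+m-2) * (S^(m+k+2)-1) * W S c (c+m-1)) * (S^(m^2) * W S (m+1) (m+k+1) * W S 1 (k+1) * W S 1 m) := by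
        rw [hW1]; ring
    _ ≤ (P S t c (c+m-1) * W S (c+1) (c+m) * (S^(k+2)-1)) * (S^(m^2) * W S (m+1) (m+k+1) * W S 1 (k+1) * W S 1 m) := by
        refine mul_le_mul_of_nonneg_right hcore (le_of_lt ?_)
        exact mul_pos (mul_pos (mul_pos hpow hWm1a) hW1k1) hW1m
    _ = P S t c (c+m-1) * (S^(m^2) * W S (m+1) (m+k+1) * W S (c+1) (c+m)) * (W S 1 (k+2) * W S 1 m) := by
        rw [hW2]; ring

lemma F_eq (n s e : ℕ) (i k : ℤ) :
    F n s e i k = P (s:ℝ) (tval s e) ((n:ℤ) - 2*i + k - 1) ((n:ℤ) - i - 2) := rfl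

lemma G_eq (n s : ℕ) (i k : ℤ) :
    G n s i k = (s:ℝ) ^ ((i-k)^2) *
      (W (s:ℝ) (i-k+1) (i+1) / W (s:ℝ) 1 (k+1)) *
      (W (s:ℝ) ((n:ℤ)-2*i+k) ((n:ℤ)-i-1) / W (s:ℝ) 1 (i-k)) := by
  have h1 : (∏ v ∈ Icc (1:ℤ) (k+1), ((s:ℝ)^(i-k+v) - 1)) = W (s:ℝ) (i-k+1) (i+1) := by
    have h := prod_shift (fun u => (s:ℝ)^u - 1) (i-k) 1 (k+1)
    simp only [show i-k+(k+1) = i+1 by ring] at h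
    exact h
  have h2 : (∏ v ∈ Icc (1:ℤ) (i-k), ((s:ℝ)^((n:ℤ)-2*i+k-1+v) - 1)) = W (s:ℝ) ((n:ℤ)-2*i+k) ((n:ℤ)-i-1) := by
    have h := prod_shift (fun u => (s:ℝ)^u - 1) ((n:ℤ)-2*i+k-1) 1 (i-k)
    simp only [show (n:ℤ)-2*i+k-1+1 = (n:ℤ)-2*i+k by ring,
      show (n:ℤ)-2*i+k-1+(i-k) = (n:ℤ)-i-1 by ring] at h
    exact h
  rw [G, Finset.prod_div_distrib, Finset.prod_div_distrib, h1, h2]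
  rfl

lemma term_le (n s e : ℕ) (hs : 2 ≤ s) {i k : ℤ} (hk1 : 2*i - (n:ℤ) + 2 ≤ k)
    (hk2 : k ≤ i - 1) (h2i : (n:ℤ) - 2 ≤ 2*i) :
    F n s e (i+1) (k+1) * G n s (i+1) (k+1) ≤ F n s e i k * G n s i k := by
  have hS : (2:ℝ) ≤ (s:ℝ) := by exact_mod_cast hs
  have hs0 : (0:ℝ) < (s:ℝ) := by linarith
  have ht : 0 < tval s e := Real.rpow_pos_of_pos hs0 _
  have H := main hS ht (i-k) k ((n:ℤ)-2*i+k-1) (by omega) (by omega) (by omega) (by omega)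
  rw [F_eq, F_eq, G_eq, G_eq]
  ring_nf at H ⊢
  exact H

lemma T_pos (n s e : ℕ) (hs : 2 ≤ s) {i k : ℤ} (hk1 : 2*i - (n:ℤ) + 1 ≤ k)
    (hk2 : k ≤ i - 1) : 0 < F n s e i k * G n s i k := by
  have hS1 : (1:ℝ) < (s:ℝ) := by exact_mod_cast (by omega : 1 < s)
  have hs0 : (0:ℝ) < (s:ℝ) := by linarith
  have ht : 0 < tval s e := Real.rpow_pos_of_pos hs0 _
  rw [F_eq, G_eq]
  have p1 := Ppos hs0 ht ((n:ℤ) - 2*i + k - 1) ((n:ℤ) - i - 2)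
  have w1 := Wpos hS1 (show (1:ℤ) ≤ i-k+1 by omega) (i+1)
  have w2 := Wpos hS1 (le_refl (1:ℤ)) (k+1)
  have w3 := Wpos hS1 (show (1:ℤ) ≤ (n:ℤ)-2*i+k by omega) ((n:ℤ)-i-1)
  have w4 := Wpos hS1 (le_refl (1:ℤ)) (i-k)
  have hp : (0:ℝ) < (s:ℝ) ^ ((i-k)^2) := zpow_pos hs0 _
  positivity

lemma extra_lt (n s e : ℕ) (hs : 2 ≤ s) {i : ℤ} (hi1 : 1 ≤ i) :
    (s:ℝ) ^ (2*(n:ℤ) - 2*(i+1) - 2) * tval s e * ((s:ℝ) ^ (i+1+1) - 1) / ((s:ℝ) - 1)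
      < (s:ℝ) ^ (2*(n:ℤ) - 2*i - 2) * tval s e * ((s:ℝ) ^ (i+1) - 1) / ((s:ℝ) - 1) := by
  have hS : (2:ℝ) ≤ (s:ℝ) := by exact_mod_cast hs
  have hs0 : (0:ℝ) < (s:ℝ) := by linarith
  have hne : (s:ℝ) ≠ 0 := ne_of_gt hs0
  have ht : 0 < tval s e := Real.rpow_pos_of_pos hs0 _
  rw [div_lt_div_iff_of_pos_right (by linarith : (0:ℝ) < (s:ℝ) - 1)]
  have e1 : (s:ℝ) ^ (2*(n:ℤ)-2*i-2) = (s:ℝ) ^ (2*(n:ℤ)-2*(i+1)-2) * ((s:ℝ) * (s:ℝ)) := by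
    rw [show (s:ℝ) * (s:ℝ) = (s:ℝ) ^ (2:ℤ) by
      rw [show (2:ℤ) = ((2:ℕ):ℤ) from rfl, zpow_natCast]; ring]
    rw [← zpow_add₀ hne]; congr 1; ring
  have e2 : (s:ℝ) ^ (i+1+1) = (s:ℝ) ^ (i+1) * (s:ℝ) := zpow_add_one₀ hne _
  have hw : (s:ℝ) * (s:ℝ) ≤ (s:ℝ) ^ (i+1) := by
    have h := zpow_le_zpow_right₀ (by linarith : (1:ℝ) ≤ (s:ℝ)) (show (2:ℤ) ≤ i+1 by omega)
    rw [show (2:ℤ) = ((2:ℕ):ℤ) from rfl, zpow_natCast] at h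
    nlinarith [h]
  have hX : (0:ℝ) < (s:ℝ) ^ (2*(n:ℤ)-2*(i+1)-2) := zpow_pos hs0 _
  rw [e1, e2]
  set S := (s:ℝ)
  set X := S ^ (2*(n:ℤ)-2*(i+1)-2)
  set w := S ^ (i+1)
  have h4 : S*(S*S) ≤ S*w := mul_le_mul_of_nonneg_left hw hs0.le
  have h5 : (0:ℝ) < S*w - S - 1 := by nlinarith [h4, hS, mul_nonneg (mul_nonneg (by linarith : (0:ℝ) ≤ S-2) hs0.le) hs0.le, mul_nonneg (by linarith : (0:ℝ) ≤ S-2) hs0.le]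
  have h6 : (0:ℝ) < X * tval s e * ((S-1)*(S*w-S-1)) :=
    mul_pos (mul_pos hX ht) (mul_pos (by linarith) h5)
  nlinarith [h6]

lemma kappa_le (n s e : ℕ) (hs : 2 ≤ s) {i : ℤ} (h2i : (n:ℤ) - 2 ≤ 2*i)
    (hi : i ≤ (n:ℤ) - 2) : kappa n s e (i+1) ≤ kappa n s e i := by
  have hmax1 : max (2*i - (n:ℤ) + 1) (-1) = 2*i - (n:ℤ) + 1 := max_eq_left (by omega)
  have hmax2 : max (2*(i+1) - (n:ℤ) + 1) (-1) = 2*i - (n:ℤ) + 3 := by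
    rw [max_eq_left (by omega)]; ring
  rw [kappa, kappa, hmax1, hmax2]
  have hre : (∑ k ∈ Icc (2*i-(n:ℤ)+2) (i-1), F n s e (i+1) (k+1) * G n s (i+1) (k+1))
      = ∑ k ∈ Icc (2*i - (n:ℤ) + 3) (i+1-1), F n s e (i+1) k * G n s (i+1) k := by
    have h := sum_shift' (fun k => F n s e (i+1) k * G n s (i+1) k) 1 (2*i-(n:ℤ)+2) (i-1)
    simp only [show 2*i-(n:ℤ)+2+1 = 2*i-(n:ℤ)+3 by ring, show i-1+1 = i+1-1 by ring] at h
    exact h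
  rw [← hre]
  rw [sum_bot (fun k => F n s e i k * G n s i k) (show 2*i-(n:ℤ)+1 ≤ i-1 by omega)]
  simp only [show 2*i-(n:ℤ)+1+1 = 2*i-(n:ℤ)+2 by ring]
  have h1 : (∑ k ∈ Icc (2*i-(n:ℤ)+2) (i-1), F n s e (i+1) (k+1) * G n s (i+1) (k+1))
      ≤ ∑ k ∈ Icc (2*i-(n:ℤ)+2) (i-1), F n s e i k * G n s i k := by
    refine Finset.sum_le_sum fun k hk => ?_
    have hk' := mem_Icc.mp hk
    exact term_le n s e hs (by omega) (by omega) h2i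
  have h2 : 0 < F n s e i (2*i-(n:ℤ)+1) * G n s i (2*i-(n:ℤ)+1) :=
    T_pos n s e hs (by omega) (by omega)
  linarith

lemma chi_step (n s e : ℕ) (hs : 2 ≤ s) {i : ℤ} (h2i : (n:ℤ) - 2 ≤ 2*i)
    (hi : i ≤ (n:ℤ) - 2) (hn : 3 ≤ n) : chi n s e (i+1) < chi n s e i := by
  have hi1 : (1:ℤ) ≤ i := by omega
  have h1 := kappa_le n s e hs h2i hi
  have h2 := extra_lt n s e hs hi1
  rw [chi, chi]
  exact add_lt_add_of_le_of_lt h1 h2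

theorem stmt_17 (n s e : ℕ) (hn : 3 ≤ n) (hs : 2 ≤ s) (he : e ≤ 4)
    (i j : ℤ) (hi : ((n:ℝ) - 2) / 2 ≤ (i:ℝ)) (hij : i < j) (hj : j ≤ (n:ℤ) - 1) :
    chi n s e i > chi n s e j := by
  have h2i : (n:ℤ) - 2 ≤ 2*i := by
    have : ((n:ℝ) - 2) ≤ 2*(i:ℝ) := by linarith
    exact_mod_cast this
  have key : ∀ j : ℤ, i + 1 ≤ j → j ≤ (n:ℤ) - 1 → chi n s e j < chi n s e i := by
    refine fun j hj1 =>
      Int.le_induction (motive := fun j _ => j ≤ (n:ℤ) - 1 → chi n s e j < chi n s e i)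
        ?_ ?_ j hj1
    · exact fun hj' => chi_step n s e hs h2i (by omega) hn
    · intro j hjge ih hj'
      have h1 : chi n s e (j+1) < chi n s e j := chi_step n s e hs (by omega) (by omega) hn
      exact h1.trans (ih (by omega))
  exact key j (by omega) hj
end

section
/- Let i, j be integers with (n−2)/2 ≤ i < j ≤ n−1. Then ξ(i) > ξ(j). -/
open Finset

/-- `ξ(i)`, the degree of the graph `(Δ_i, ⊥_max)`:
`ξ(i) = s^{(n−i−1)²} · ∏_{u=0}^{n−i−2}(s^u·t+1) · ∏_{u=n−i}^{i+1}(s^u−1) / ∏_{u=1}^{2i−n+2}(s^u−1)`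
for `(n−2)/2 ≤ i ≤ n−2`, and `ξ(n−1) = 0`. -/
noncomputable def xi (n s e : ℕ) (i : ℤ) : ℝ :=
  if i = (n:ℤ) - 1 then 0 else
    (s:ℝ) ^ (((n:ℤ) - i - 1)^2) *
    (∏ u ∈ Finset.Icc (0:ℤ) ((n:ℤ) - i - 2), ((s:ℝ) ^ u * tval s e + 1)) *
    (∏ u ∈ Finset.Icc ((n:ℤ) - i) (i + 1), ((s:ℝ) ^ u - 1)) /
    (∏ u ∈ Finset.Icc (1:ℤ) (2*i - (n:ℤ) + 2), ((s:ℝ) ^ u - 1))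

lemma prod_Icc_top' {a b : ℤ} (h : a ≤ b + 1) (f : ℤ → ℝ) :
    ∏ x ∈ Icc a (b+1), f x = (∏ x ∈ Icc a b, f x) * f (b+1) := by
  have : Icc a (b+1) = insert (b+1) (Icc a b) := by ext x; simp [mem_Icc]; omega
  rw [this, Finset.prod_insert (by simp [mem_Icc]), mul_comm]

lemma prod_Icc_bot' {a b : ℤ} (h : a ≤ b) (f : ℤ → ℝ) :
    ∏ x ∈ Icc a b, f x = f a * ∏ x ∈ Icc (a+1) b, f x := by
  have : Icc a b = insert a (Icc (a+1) b) := by ext x; simp [mem_Icc]; omega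
  rw [this, Finset.prod_insert (by simp [mem_Icc])]

lemma two_le_zpow {s : ℝ} (hs : 2 ≤ s) {u : ℤ} (hu : 1 ≤ u) : 2 ≤ s ^ u := by
  calc (2:ℝ) ≤ s := hs
  _ = s ^ (1:ℤ) := (zpow_one s).symm
  _ ≤ s ^ u := zpow_le_zpow_right₀ (by linarith) hu

lemma tval_ge_one {s e : ℕ} (hs : 2 ≤ s) : 1 ≤ tval s e := by
  have : (1:ℝ) ≤ (s:ℝ) := by exact_mod_cast Nat.one_le_of_lt hs
  exact Real.one_le_rpow this (by positivity)

lemma xi_pos (n s e : ℕ) (hn : 3 ≤ n) (hs : 2 ≤ s) (i : ℤ)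
    (h1 : (n:ℤ) - 2 ≤ 2*i) (h2 : i ≤ (n:ℤ) - 2) : 0 < xi n s e i := by
  have hs2 : (2:ℝ) ≤ (s:ℝ) := by exact_mod_cast hs
  have hs0 : (0:ℝ) < (s:ℝ) := by linarith
  rw [xi, if_neg (by omega)]
  apply div_pos
  · apply mul_pos
    apply mul_pos
    · exact zpow_pos hs0 _
    · apply Finset.prod_pos
      intro u _
      have h1 : (0:ℝ) < (s:ℝ) ^ u := zpow_pos hs0 _
      have h2 : (0:ℝ) < tval s e := by
        have := tval_ge_one (e := e) hs; linarith
      nlinarith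
    · apply Finset.prod_pos
      intro u hu
      rw [mem_Icc] at hu
      have : (2:ℝ) ≤ (s:ℝ) ^ u := two_le_zpow hs2 (by omega)
      linarith
  · apply Finset.prod_pos
    intro u hu
    rw [mem_Icc] at hu
    have : (2:ℝ) ≤ (s:ℝ) ^ u := two_le_zpow hs2 (by omega)
    linarith

/-- Core inequality. -/
lemma core_ineq {s t : ℝ} (hs : 2 ≤ s) (ht : 1 ≤ t) {m i : ℤ}
    (hm : 2 ≤ m) (him : m - 1 ≤ i) :
    (s ^ m - 1) * (s ^ (i+2) - 1) <
      s ^ (2*m-1) * (s ^ (m-1) * t + 1) * (s ^ (i-m+2) - 1) * (s ^ (i-m+3) - 1) := by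
  have hs0 : (0:ℝ) < s := by linarith
  have hs1 : (1:ℝ) ≤ s := by linarith
  have hmul : ∀ a b : ℤ, s ^ a * s ^ b = s ^ (a+b) := fun a b => (zpow_add₀ (ne_of_gt hs0) a b).symm
  set P := s ^ (2*m-1) with hP
  set Q := s ^ (m-1) with hQ
  set X := s ^ (i-m+2) with hX
  set Y := s ^ (i-m+3) with hY
  set M := s ^ m with hM
  set N := s ^ (i+2) with hN
  set K := s ^ (i+1) with hK
  have hPp : 0 < P := zpow_pos hs0 _
  have hQp : 0 < Q := zpow_pos hs0 _
  have hX2 : 2 ≤ X := two_le_zpow hs (by omega)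
  have hY2 : 2 ≤ Y := two_le_zpow hs (by omega)
  have hM2 : 2 ≤ M := two_le_zpow hs (by omega)
  have hN2 : 2 ≤ N := two_le_zpow hs (by omega)
  have hK4 : 4 ≤ K := by
    have h2 : s ^ ((1:ℤ)+1) ≤ s ^ (i+1) := zpow_le_zpow_right₀ hs1 (by omega)
    rw [← hmul, zpow_one] at h2
    have h4 : (2:ℝ)*2 ≤ s*s := mul_le_mul hs hs (by norm_num) (by linarith)
    rw [hK]
    linarith
  have f1 : P * (Q * (X * Y)) = s ^ (m + 2*i + 3) := by
    rw [hX, hY, hmul, hQ, hmul, hP, hmul]; congr 1; ring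
  have f2 : M * (N * K) = s ^ (m + 2*i + 3) := by
    rw [hN, hK, hmul, hM, hmul]; congr 1; ring
  have h1 : (M - 1) * (N - 1) < M * N := by nlinarith
  have hMN : 0 < M * N := by positivity
  have h2' : M * N * 4 ≤ M * N * K := mul_le_mul_of_nonneg_left hK4 hMN.le
  have h2 : M * N ≤ M * N * K / 4 := by linarith
  have h5 : P * Q * (X/2) * (Y/2) < P * (Q * t + 1) * (X - 1) * (Y - 1) := by
    have hq : Q < Q * t + 1 := by nlinarith
    have hq' : (0:ℝ) < Q * t + 1 := by nlinarith
    have hx : X/2 ≤ X - 1 := by linarith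
    have hy : Y/2 ≤ Y - 1 := by linarith
    have hx0 : 0 < X/2 := by linarith
    have hy0 : 0 < Y/2 := by linarith
    have h5a : P * Q * (X/2) * (Y/2) < P * (Q * t + 1) * (X/2) * (Y/2) := by
      have : (P * (X/2) * (Y/2)) * Q < (P * (X/2) * (Y/2)) * (Q * t + 1) :=
        mul_lt_mul_of_pos_left hq (by positivity)
      nlinarith [this]
    have hA1 : 0 < P * (Q * t + 1) := mul_pos hPp hq'
    have s1 : P*(Q*t+1)*(X/2) ≤ P*(Q*t+1)*(X-1) := mul_le_mul_of_nonneg_left hx hA1.le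
    have s1' : P*(Q*t+1)*(X/2)*(Y/2) ≤ P*(Q*t+1)*(X-1)*(Y/2) :=
      mul_le_mul_of_nonneg_right s1 hy0.le
    have s2 : P*(Q*t+1)*(X-1)*(Y/2) ≤ P*(Q*t+1)*(X-1)*(Y-1) :=
      mul_le_mul_of_nonneg_left hy (mul_nonneg hA1.le (by linarith : (0:ℝ) ≤ X - 1))
    linarith
  have heq : M * N * K / 4 = P * Q * (X/2) * (Y/2) := by
    have : M * N * K = P * Q * (X * Y) := by
      rw [mul_assoc M, f2, mul_assoc, f1]
    rw [this]; ring
  linarith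

/-- Consecutive step. -/
lemma xi_step (n s e : ℕ) (hn : 3 ≤ n) (hs : 2 ≤ s) (i : ℤ)
    (h1 : (n:ℤ) - 2 ≤ 2*i) (h2 : i ≤ (n:ℤ) - 3) :
    xi n s e (i+1) < xi n s e i := by
  have hs2 : (2:ℝ) ≤ (s:ℝ) := by exact_mod_cast hs
  have hs0 : (0:ℝ) < (s:ℝ) := by linarith
  have ht := tval_ge_one (e := e) hs
  set t := tval s e
  set m : ℤ := (n:ℤ) - i - 1 with hmdef
  have hm : 2 ≤ m := by omega
  have him : m - 1 ≤ i := by omega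
  rw [xi, xi, if_neg (by omega), if_neg (by omega)]
  -- rewrite index expressions in terms of m and i
  have e1 : (n:ℤ) - i - 1 = m := rfl
  have e2 : (n:ℤ) - (i+1) - 1 = m - 1 := by omega
  have e3 : (n:ℤ) - i - 2 = m - 2 + 1 := by omega
  have e4 : (n:ℤ) - (i+1) - 2 = m - 2 := by omega
  have e5 : (n:ℤ) - i = m + 1 := by omega
  have e6 : (n:ℤ) - (i+1) = m := by omega
  have e7 : 2*i - (n:ℤ) + 2 = i - m + 1 := by omega
  have e8 : 2*(i+1) - (n:ℤ) + 2 = (i - m + 2) + 1 := by omega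
  rw [e1, e2, e3, e4, e5, e6, e7, e8]
  -- abbreviations
  set f : ℤ → ℝ := fun u => (s:ℝ) ^ u - 1 with hf
  set g : ℤ → ℝ := fun u => (s:ℝ) ^ u * t + 1 with hg
  -- positivity facts
  have hfpos : ∀ u : ℤ, 1 ≤ u → 0 < f u := by
    intro u hu; have := two_le_zpow hs2 hu; simp only [hf]; linarith
  have hgpos : ∀ u : ℤ, 0 < g u := by
    intro u
    have h1 : (0:ℝ) < (s:ℝ) ^ u := zpow_pos hs0 _
    simp only [hg]; nlinarith
  have hBpos : ∀ a b : ℤ, 0 < ∏ u ∈ Icc a b, g u :=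
    fun a b => Finset.prod_pos (fun u _ => hgpos u)
  have hCpos : ∀ a b : ℤ, 1 ≤ a → 0 < ∏ u ∈ Icc a b, f u := by
    intro a b ha
    apply Finset.prod_pos
    intro u hu; rw [mem_Icc] at hu; exact hfpos u (by omega)
  -- product splittings
  have sB : ∏ u ∈ Icc (0:ℤ) (m-2+1), g u = (∏ u ∈ Icc (0:ℤ) (m-2), g u) * g (m-1) := by
    rw [prod_Icc_top' (by omega), show m-2+1 = m-1 from by ring]
  have sC : ∏ u ∈ Icc m (i+1+1), f u
      = f m * ((∏ u ∈ Icc (m+1) (i+1), f u) * f (i+2)) := by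
    rw [prod_Icc_bot' (by omega), prod_Icc_top' (by omega),
        show i+1+1 = i+2 from by ring]
  have sD : ∏ u ∈ Icc (1:ℤ) ((i-m+2)+1), f u
      = (∏ u ∈ Icc (1:ℤ) (i-m+1), f u) * (f (i-m+2) * f (i-m+3)) := by
    rw [prod_Icc_top' (by omega), show (i-m+2:ℤ) = (i-m+1)+1 from by ring,
        prod_Icc_top' (by omega), show (i-m+1)+1 = i-m+2 from by ring,
        show (i-m+2)+1 = i-m+3 from by ring, mul_assoc]
  have sA : (s:ℝ) ^ (m^2) = (s:ℝ) ^ ((m-1)^2) * (s:ℝ) ^ (2*m-1) := by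
    rw [← zpow_add₀ (ne_of_gt hs0)]; congr 1; ring
  rw [sA, sB, sC, sD]
  set A := (s:ℝ) ^ ((m-1)^2) with hA
  set B := ∏ u ∈ Icc (0:ℤ) (m-2), g u with hB
  set C := ∏ u ∈ Icc (m+1) (i+1), f u with hC
  set D := ∏ u ∈ Icc (1:ℤ) (i-m+1), f u with hD
  have hAp : 0 < A := zpow_pos hs0 _
  have hBp : 0 < B := hBpos _ _
  have hCp : 0 < C := hCpos _ _ (by omega)
  have hDp : 0 < D := hCpos _ _ (by omega)
  -- core
  have key := core_ineq hs2 ht hm him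
  -- goal : A * B * (f m * (C * f (i+2))) / (D * (f (i-m+2) * f (i-m+3)))
  --      < A * s^(2m-1) * (B * g (m-1)) * C / D
  have hfm : 0 < f m := hfpos m (by omega)
  have hfi2 : 0 < f (i+2) := hfpos _ (by omega)
  have hf1 : 0 < f (i-m+2) := hfpos _ (by omega)
  have hf2 : 0 < f (i-m+3) := hfpos _ (by omega)
  rw [div_lt_div_iff₀ (by exact mul_pos hDp (mul_pos hf1 hf2)) hDp]
  have expand : A * B * (f m * (C * f (i+2))) * D
      = (A*B*C*D) * (f m * f (i+2)) := by ring
  have expand2 : A * (s:ℝ)^(2*m-1) * (B * g (m-1)) * C * (D * (f (i-m+2) * f (i-m+3)))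
      = (A*B*C*D) * ((s:ℝ)^(2*m-1) * g (m-1) * f (i-m+2) * f (i-m+3)) := by ring
  rw [expand, expand2]
  apply mul_lt_mul_of_pos_left _ (by positivity)
  calc f m * f (i+2) = ((s:ℝ)^m - 1) * ((s:ℝ)^(i+2) - 1) := rfl
    _ < (s:ℝ) ^ (2*m-1) * ((s:ℝ) ^ (m-1) * t + 1) * ((s:ℝ) ^ (i-m+2) - 1) * ((s:ℝ) ^ (i-m+3) - 1) := key
    _ = (s:ℝ)^(2*m-1) * g (m-1) * f (i-m+2) * f (i-m+3) := rfl

lemma xi_top (n s e : ℕ) : xi n s e ((n:ℤ)-1) = 0 := by simp [xi]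

theorem stmt_18 (n s e : ℕ) (hn : 3 ≤ n) (hs : 2 ≤ s) (he : e ≤ 4)
    (i j : ℤ) (hi : ((n:ℝ) - 2) / 2 ≤ (i:ℝ)) (hij : i < j) (hj : j ≤ (n:ℤ) - 1) :
    xi n s e i > xi n s e j := by
  have h2i : (n:ℤ) - 2 ≤ 2*i := by
    have h : (n:ℝ) - 2 ≤ 2 * (i:ℝ) := by linarith
    exact_mod_cast h
  have main : ∀ k : ℤ, i + 1 ≤ k → k ≤ (n:ℤ) - 1 → xi n s e k < xi n s e i := by
    intro k hk
    refine Int.le_induction (motive := fun k _ => k ≤ (n:ℤ) - 1 → xi n s e k < xi n s e i) ?_ ?_ k hk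
    · intro hle
      by_cases hc : i + 1 = (n:ℤ) - 1
      · rw [hc, xi_top]
        exact xi_pos n s e hn hs i h2i (by omega)
      · exact xi_step n s e hn hs i h2i (by omega)
    · intro k hk ih hle
      by_cases hc : k + 1 = (n:ℤ) - 1
      · rw [hc, xi_top]
        exact xi_pos n s e hn hs i h2i (by omega)
      · have h1 : xi n s e (k+1) < xi n s e k := xi_step n s e hn hs k (by omega) (by omega)
        have h2 := ih (by omega)

        linarith
  exact main j (by omega) hj
end
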